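/- Let c be an odd positive integer and let a be an integer coprime to c. Define G(a,c) = ∑_{x=0}^{c−1} exp(2πi·a·x²/c) ∈ ℂ. Then G(a,c) = J(a|c) · G(1,c), where J(a|c) denotes the Jacobi symbol of a modulo c. -/

import Mathlib

open Finset

/-- The quadratic Gauss sum `G(a,c) = ∑_{x=0}^{c−1} exp(2πi·a·x²/c)`. -/
noncomputable def gaussSum2 (a : ℤ) (c : ℕ) : ℂ :=
  ∑ x ∈ Finset.range c,
    Complex.exp (2 * Real.pi * Complex.I * a * (x : ℂ) ^ 2 / c)

section GaussAux
open Complex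

noncomputable def Ee (c : ℕ) (n : ℤ) : ℂ := Complex.exp (2 * Real.pi * Complex.I * n / c)

lemma Ee_add (c : ℕ) (m n : ℤ) : Ee c (m + n) = Ee c m * Ee c n := by
  rw [Ee, Ee, Ee, ← Complex.exp_add]
  congr 1
  push_cast
  ring

lemma Ee_nat_mul (c : ℕ) (hc : c ≠ 0) (k : ℤ) : Ee c ((c : ℤ) * k) = 1 := by
  rw [Ee]
  have : (2 : ℂ) * Real.pi * Complex.I * ((c : ℤ) * k : ℤ) / c = k * (2 * Real.pi * Complex.I) := by
    have hc' : (c : ℂ) ≠ 0 := Nat.cast_ne_zero.mpr hc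
    field_simp
    simp
  rw [this, Complex.exp_int_mul_two_pi_mul_I]

lemma Ee_congr {c : ℕ} (hc : c ≠ 0) {m n : ℤ} (h : (c : ℤ) ∣ m - n) : Ee c m = Ee c n := by
  obtain ⟨k, hk⟩ := h
  have : m = n + c * k := by linarith
  rw [this, Ee_add, Ee_nat_mul c hc, mul_one]

lemma Ee_rescale (d c : ℕ) (hd : d ≠ 0) (n : ℤ) : Ee (d * c) ((d : ℤ) * n) = Ee c n := by
  rw [Ee, Ee]
  congr 1
  push_cast
  rw [mul_div_assoc, mul_div_mul_left _ _ (by exact_mod_cast hd : (d : ℂ) ≠ 0), mul_div_assoc]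

lemma Ee_pow (c : ℕ) (a : ℤ) (x : ℕ) : Ee c (a * x) = Ee c a ^ x := by
  induction x with
  | zero => simp [Ee]
  | succ n ih =>
      have : a * ((n : ℤ) + 1) = a * n + a := by ring
      push_cast
      rw [this, Ee_add, ih, pow_succ]

lemma Ee_eq_one_iff {c : ℕ} (hc : c ≠ 0) (a : ℤ) : Ee c a = 1 ↔ (c : ℤ) ∣ a := by
  constructor
  · intro h
    rw [Ee, Complex.exp_eq_one_iff] at h
    obtain ⟨n, hn⟩ := h
    have hc' : (c : ℂ) ≠ 0 := Nat.cast_ne_zero.mpr hc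
    have h2 : (2 : ℂ) * Real.pi * Complex.I ≠ 0 := by
      simp [Real.pi_ne_zero, Complex.I_ne_zero, Complex.ofReal_ne_zero]
    field_simp at hn
    -- hn : 2 * π * I * a = n * (2 * π * I) * c
    have : (a : ℂ) = (n : ℂ) * c := by
      apply mul_left_cancel₀ h2
      rw [hn]; ring
    have : (a : ℂ) = ((n * c : ℤ) : ℂ) := by push_cast; exact this
    exact ⟨n, by rw [mul_comm]; exact_mod_cast this⟩
  · intro ⟨k, hk⟩
    rw [hk]
    exact Ee_nat_mul c hc k

lemma geom_Ee {c : ℕ} (hc : 0 < c) (a : ℤ) :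
    ∑ x ∈ range c, Ee c (a * x) = if (c : ℤ) ∣ a then (c : ℂ) else 0 := by
  simp_rw [Ee_pow]
  by_cases h : (c : ℤ) ∣ a
  · rw [if_pos h, (Ee_eq_one_iff hc.ne' a).mpr h]
    simp
  · rw [if_neg h]
    have h1 : Ee c a ≠ 1 := fun hh => h ((Ee_eq_one_iff hc.ne' a).mp hh)
    rw [geom_sum_eq h1]
    have : Ee c a ^ c = 1 := by
      rw [← Ee_pow, mul_comm]
      exact Ee_nat_mul c hc.ne' a
    rw [this, sub_self, zero_div]

lemma gaussSum2_eq (a : ℤ) (c : ℕ) : gaussSum2 a c = ∑ x ∈ range c, Ee c (a * (x : ℤ) ^ 2) := by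
  unfold gaussSum2 Ee
  refine Finset.sum_congr rfl fun x _ => ?_
  congr 1
  push_cast
  ring

lemma sum_zmod_eq_sum_range (c : ℕ) [NeZero c] (f : ℕ → ℂ) :
    ∑ y : ZMod c, f (y.val) = ∑ x ∈ range c, f x := by
  apply Finset.sum_nbij' (fun y => ZMod.val y) (fun x => (x : ZMod c))
  · intro y _; exact mem_range.mpr (ZMod.val_lt y)
  · intro x _; exact mem_univ _
  · intro y _; exact ZMod.natCast_rightInverse y
  · intro x hx; exact ZMod.val_cast_of_lt (mem_range.mp hx)
  · intro y _; rfl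

lemma Ee_zmod {c : ℕ} [NeZero c] {m n : ℤ} (h : ((m : ZMod c)) = ((n : ZMod c))) :
    Ee c m = Ee c n := by
  apply Ee_congr (NeZero.ne c)
  have := (ZMod.intCast_eq_intCast_iff' m n c).mp h
  exact Int.ModEq.dvd this.symm

lemma gauss_prime_aux (p : ℕ) [hp : Fact p.Prime] (hp2 : p ≠ 2) (b : ℤ) (hb : ¬ (p : ℤ) ∣ b) :
    gaussSum2 b p = ∑ t : ZMod p, (quadraticChar (ZMod p) t : ℂ) * Ee p (b * (t.val : ℤ)) := by
  have hchar : ringChar (ZMod p) ≠ 2 := (ZMod.ringChar_zmod_n p).substr hp2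
  have h1 : gaussSum2 b p = ∑ x : ZMod p, Ee p (b * ((x.val : ℤ)) ^ 2) := by
    rw [gaussSum2_eq, ← sum_zmod_eq_sum_range p (fun x => Ee p (b * (x : ℤ) ^ 2))]
  rw [h1]
  have h2 : ∀ x : ZMod p, Ee p (b * ((x.val : ℤ)) ^ 2) = Ee p (b * ((x ^ 2).val : ℤ)) := by
    intro x
    apply Ee_zmod
    push_cast [ZMod.natCast_val, ZMod.cast_id]
    ring
  simp_rw [h2]
  -- fiberwise sum over t = x^2
  have hf : ∑ x : ZMod p, Ee p (b * ((x ^ 2).val : ℤ))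
      = ∑ t : ZMod p, ∑ _x ∈ Finset.filter (fun x : ZMod p => x ^ 2 = t) univ,
          Ee p (b * (t.val : ℤ)) :=
    (Finset.sum_fiberwise_of_maps_to' (g := fun x : ZMod p => x ^ 2)
      (fun i _ => mem_univ _) (fun t => Ee p (b * (t.val : ℤ)))).symm
  rw [hf]
  simp only [Finset.sum_const]
  have h3 : ∀ t : ZMod p, (Finset.filter (fun x : ZMod p => x ^ 2 = t) univ).card
      • Ee p (b * (t.val : ℤ))
      = (quadraticChar (ZMod p) t : ℂ) * Ee p (b * (t.val : ℤ)) + Ee p (b * (t.val : ℤ)) := by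
    intro t
    have hcard : ((Finset.filter (fun x : ZMod p => x ^ 2 = t) univ).card : ℤ)
        = quadraticChar (ZMod p) t + 1 := by
      have := quadraticChar_card_sqrts hchar t
      rwa [Set.toFinset_setOf] at this
    have hc2 : ((Finset.filter (fun x : ZMod p => x ^ 2 = t) univ).card : ℂ)
        = (quadraticChar (ZMod p) t : ℂ) + 1 := by exact_mod_cast hcard
    rw [nsmul_eq_mul, hc2, add_mul, one_mul]
  simp_rw [h3]
  rw [Finset.sum_add_distrib]
  have h4 : ∑ t : ZMod p, Ee p (b * (t.val : ℤ)) = 0 := by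
    rw [sum_zmod_eq_sum_range p (fun x => Ee p (b * (x : ℤ))), geom_Ee hp.out.pos b, if_neg hb]
  rw [h4, add_zero]

lemma gauss_prime (p : ℕ) [hp : Fact p.Prime] (hp2 : p ≠ 2) (b : ℤ) (hb : ¬ (p : ℤ) ∣ b) :
    gaussSum2 b p = (legendreSym p b : ℂ) * gaussSum2 1 p := by
  have hb1 : ¬ (p : ℤ) ∣ (1 : ℤ) := by
    intro h
    have := Int.le_of_dvd one_pos h
    have := hp.out.two_le
    omega
  rw [gauss_prime_aux p hp2 b hb, gauss_prime_aux p hp2 1 hb1]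
  have hbar : ((b : ZMod p)) ≠ 0 := by rwa [Ne, ZMod.intCast_zmod_eq_zero_iff_dvd]
  have key : ∀ t : ZMod p,
      Ee p (b * (t.val : ℤ)) = Ee p (1 * ((((b : ZMod p) * t).val : ℕ) : ℤ)) := by
    intro t
    apply Ee_zmod
    push_cast [ZMod.natCast_val, ZMod.cast_id]
    ring
  simp_rw [key]
  have hsq : (quadraticChar (ZMod p) ((b : ZMod p)) : ℂ)
      * (quadraticChar (ZMod p) ((b : ZMod p)) : ℂ) = 1 := by
    have h := quadraticChar_sq_one hbar
    rw [sq] at h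
    exact_mod_cast congrArg (fun z : ℤ => (z : ℂ)) h
  have hre : (quadraticChar (ZMod p) ((b : ZMod p)) : ℂ)
      * (∑ t : ZMod p, (quadraticChar (ZMod p) t : ℂ)
          * Ee p (1 * ((((b : ZMod p) * t).val : ℕ) : ℤ)))
      = ∑ t : ZMod p, (quadraticChar (ZMod p) t : ℂ) * Ee p (1 * ((t.val : ℕ) : ℤ)) := by
    rw [Finset.mul_sum,
      ← Equiv.sum_comp (Equiv.mulLeft₀ ((b : ZMod p)) hbar)
        (fun u => (quadraticChar (ZMod p) u : ℂ) * Ee p (1 * ((u.val : ℕ) : ℤ)))]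
    refine Finset.sum_congr rfl fun t _ => ?_
    have happ : (Equiv.mulLeft₀ ((b : ZMod p)) hbar) t = (b : ZMod p) * t := rfl
    rw [happ]
    rw [map_mul]
    push_cast
    ring
  have hleg : (legendreSym p b : ℂ) = (quadraticChar (ZMod p) ((b : ZMod p)) : ℂ) := rfl
  rw [hleg]
  calc ∑ t : ZMod p, (quadraticChar (ZMod p) t : ℂ)
          * Ee p (1 * ((((b : ZMod p) * t).val : ℕ) : ℤ))
      = ((quadraticChar (ZMod p) ((b : ZMod p)) : ℂ)
          * (quadraticChar (ZMod p) ((b : ZMod p)) : ℂ))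
        * ∑ t : ZMod p, (quadraticChar (ZMod p) t : ℂ)
          * Ee p (1 * ((((b : ZMod p) * t).val : ℕ) : ℤ)) := by rw [hsq, one_mul]
    _ = (quadraticChar (ZMod p) ((b : ZMod p)) : ℂ)
        * ((quadraticChar (ZMod p) ((b : ZMod p)) : ℂ)
          * ∑ t : ZMod p, (quadraticChar (ZMod p) t : ℂ)
            * Ee p (1 * ((((b : ZMod p) * t).val : ℕ) : ℤ))) := by ring
    _ = _ := by rw [hre]

lemma sum_range_mul (M k : ℕ) (hM : 0 < M) (f : ℕ → ℂ) :
    ∑ x ∈ range (M * k), f x = ∑ y ∈ range M, ∑ z ∈ range k, f (y + M * z) := by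
  rw [← Finset.sum_product']
  apply Finset.sum_nbij' (fun x => ((x % M, x / M) : ℕ × ℕ)) (fun q => q.1 + M * q.2)
  · intro x hx
    rw [mem_range] at hx
    refine Finset.mem_product.mpr ⟨mem_range.mpr (Nat.mod_lt _ hM), mem_range.mpr ?_⟩
    exact Nat.div_lt_of_lt_mul hx
  · intro q hq
    rw [Finset.mem_product, mem_range, mem_range] at hq
    rw [mem_range]
    calc q.1 + M * q.2 < M + M * q.2 := by omega
      _ ≤ M * k := by
          have : q.2 + 1 ≤ k := hq.2
          calc M + M * q.2 = M * (q.2 + 1) := by ring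
            _ ≤ M * k := Nat.mul_le_mul_left M this
  · intro x _
    simp [Nat.mod_add_div]
  · intro q hq
    rw [Finset.mem_product, mem_range, mem_range] at hq
    have h1 : (q.1 + M * q.2) % M = q.1 := by
      rw [Nat.add_mul_mod_self_left, Nat.mod_eq_of_lt hq.1]
    have h2 : (q.1 + M * q.2) / M = q.2 := by
      rw [Nat.add_mul_div_left _ _ hM, Nat.div_eq_of_lt hq.1, zero_add]
    simp [h1, h2]
  · intro x _
    rw [Nat.mod_add_div]

lemma gauss_psq (p L : ℕ) (hp : p.Prime) (hp2 : p ≠ 2) (hL : 0 < L) (a : ℤ)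
    (ha : ¬ (p : ℤ) ∣ a) :
    gaussSum2 a (p ^ 2 * L) = p * gaussSum2 a L := by
  have hp0 : 0 < p := hp.pos
  have hM : 0 < p * L := Nat.mul_pos hp0 hL
  have hN : p ^ 2 * L = (p * L) * p := by ring
  have hNne : (p ^ 2 * L) ≠ 0 := by positivity
  rw [gaussSum2_eq, gaussSum2_eq]
  rw [hN, sum_range_mul (p * L) p hM]
  have hterm : ∀ y z : ℕ, y < p * L → z < p →
      Ee ((p * L) * p) (a * ((y + p * L * z : ℕ) : ℤ) ^ 2)
        = Ee ((p * L) * p) (a * (y : ℤ) ^ 2) * Ee p ((2 * a * y) * (z : ℤ)) := by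
    intro y z _ _
    have expand : a * ((y + p * L * z : ℕ) : ℤ) ^ 2
        = (a * (y : ℤ) ^ 2 + (p * L : ℕ) * (2 * a * y * z)) + ((p * L) * p : ℕ) * (a * L * z ^ 2) := by
      push_cast
      ring
    rw [expand, Ee_add, Ee_nat_mul _ (by positivity) _, mul_one, Ee_add]
    congr 1
    exact Ee_rescale (p * L) p (by positivity) _
  rw [Finset.sum_congr rfl fun y hy => Finset.sum_congr rfl fun z hz =>
    hterm y z (mem_range.mp hy) (mem_range.mp hz)]
  have hinner : ∀ y : ℕ, ∑ z ∈ range p, Ee ((p * L) * p) (a * (y : ℤ) ^ 2)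
      * Ee p ((2 * a * y) * (z : ℤ))
      = if (p : ℤ) ∣ (y : ℤ) then (p : ℂ) * Ee ((p * L) * p) (a * (y : ℤ) ^ 2) else 0 := by
    intro y
    rw [← Finset.mul_sum, geom_Ee hp0 (2 * a * y)]
    have hdvd : (p : ℤ) ∣ 2 * a * (y : ℤ) ↔ (p : ℤ) ∣ (y : ℤ) := by
      constructor
      · intro h
        have hpi : Prime (p : ℤ) := Nat.prime_iff_prime_int.mp hp
        rcases hpi.dvd_mul.mp h with h' | h'
        · rcases hpi.dvd_mul.mp h' with h'' | h''
          · exfalso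
            have := Int.le_of_dvd two_pos h''
            have h3 : 3 ≤ p := by
              rcases hp.two_le.lt_or_eq with h | h
              · omega
              · exact absurd h.symm hp2
            have : (3 : ℤ) ≤ p := by exact_mod_cast h3
            omega
          · exact absurd h'' ha
        · exact h'
      · intro h
        exact Dvd.dvd.mul_left h _
    rw [mul_ite, mul_zero]
    simp only [hdvd]
    split_ifs
    · ring
    · rfl
  rw [Finset.sum_congr rfl fun y _ => hinner y]
  rw [← Finset.sum_filter, Finset.mul_sum]
  have hnatdvd : ∀ y ∈ Finset.filter (fun y : ℕ => (p : ℤ) ∣ (y : ℤ)) (range (p * L)), p ∣ y := by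
    intro y hy
    have := (Finset.mem_filter.mp hy).2
    exact_mod_cast this
  apply Finset.sum_nbij' (fun y => y / p) (fun w => p * w)
  · intro y hy
    have hlt := mem_range.mp (Finset.mem_filter.mp hy).1
    exact mem_range.mpr (Nat.div_lt_of_lt_mul hlt)
  · intro w hw
    refine Finset.mem_filter.mpr ⟨mem_range.mpr ?_, ?_⟩
    · exact (Nat.mul_lt_mul_left hp0).mpr (mem_range.mp hw)
    · exact ⟨w, by push_cast; ring⟩
  · intro y hy
    exact Nat.mul_div_cancel' (hnatdvd y hy)
  · intro w _
    exact Nat.mul_div_cancel_left w hp0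
  · intro y hy
    obtain ⟨w, hw⟩ := hnatdvd y hy
    have hyp : y / p = w := by rw [hw, Nat.mul_div_cancel_left w hp0]
    have hval : a * (y : ℤ) ^ 2 = ((p ^ 2 : ℕ) : ℤ) * (a * (w : ℤ) ^ 2) := by
      rw [hw]; push_cast; ring
    have hmod : (p * L) * p = p ^ 2 * L := by ring
    rw [hyp, hmod, hval, Ee_rescale (p ^ 2) L (pow_ne_zero _ hp0.ne') _]


lemma crt_inj {c₁ c₂ : ℕ} (hco : Nat.Coprime c₁ c₂) {q q' : ℕ × ℕ}
    (hq : q.1 < c₁ ∧ q.2 < c₂) (hq' : q'.1 < c₁ ∧ q'.2 < c₂)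
    (heq : (c₂ * q.1 + c₁ * q.2) % (c₁ * c₂) = (c₂ * q'.1 + c₁ * q'.2) % (c₁ * c₂)) :
    q = q' := by
  have hmod : c₂ * q.1 + c₁ * q.2 ≡ c₂ * q'.1 + c₁ * q'.2 [MOD c₁ * c₂] := heq
  have hu : q.1 = q'.1 := by
    have h' : c₂ * q.1 + c₁ * q.2 ≡ c₂ * q'.1 + c₁ * q'.2 [MOD c₁] := hmod.of_mul_right c₂
    have h'' : c₂ * q.1 ≡ c₂ * q'.1 [MOD c₁] := by
      unfold Nat.ModEq at h' ⊢
      rwa [Nat.add_mul_mod_self_left, Nat.add_mul_mod_self_left] at h'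
    have := Nat.ModEq.cancel_left_of_coprime hco h''
    unfold Nat.ModEq at this
    rwa [Nat.mod_eq_of_lt hq.1, Nat.mod_eq_of_lt hq'.1] at this
  have hv : q.2 = q'.2 := by
    have h' : c₂ * q.1 + c₁ * q.2 ≡ c₂ * q'.1 + c₁ * q'.2 [MOD c₂] := hmod.of_mul_left c₁
    have h'' : c₁ * q.2 ≡ c₁ * q'.2 [MOD c₂] := by
      unfold Nat.ModEq at h' ⊢
      rwa [add_comm (c₂ * q.1) _, add_comm (c₂ * q'.1) _,
        Nat.add_mul_mod_self_left, Nat.add_mul_mod_self_left] at h'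
    have := Nat.ModEq.cancel_left_of_coprime hco.symm h''
    unfold Nat.ModEq at this
    rwa [Nat.mod_eq_of_lt hq.2, Nat.mod_eq_of_lt hq'.2] at this
  exact Prod.ext hu hv

lemma gauss_crt (c₁ c₂ : ℕ) (h1 : 0 < c₁) (h2 : 0 < c₂) (hco : Nat.Coprime c₁ c₂) (a : ℤ) :
    gaussSum2 a (c₁ * c₂) = gaussSum2 (a * c₂) c₁ * gaussSum2 (a * c₁) c₂ := by
  have hn : 0 < c₁ * c₂ := Nat.mul_pos h1 h2
  rw [gaussSum2_eq, gaussSum2_eq, gaussSum2_eq, Finset.sum_mul_sum, ← Finset.sum_product']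
  symm
  apply Finset.sum_bij (fun (q : ℕ × ℕ) _ => (c₂ * q.1 + c₁ * q.2) % (c₁ * c₂))
  case hi =>
    intro q _
    exact mem_range.mpr (Nat.mod_lt _ hn)
  case i_inj =>
    intro q hq q' hq' heq
    rw [Finset.mem_product, mem_range, mem_range] at hq hq'
    exact crt_inj hco hq hq' heq
  case i_surj =>
    intro b hb
    have hcard : (range (c₁ * c₂)).card ≤ ((range c₁) ×ˢ (range c₂)).card := by
      rw [Finset.card_product, Finset.card_range, Finset.card_range, Finset.card_range]
    obtain ⟨q, hq, hqb⟩ := Finset.surj_on_of_inj_on_of_card_le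
      (fun (q : ℕ × ℕ) _ => (c₂ * q.1 + c₁ * q.2) % (c₁ * c₂))
      (fun q _ => mem_range.mpr (Nat.mod_lt _ hn))
      (fun q q' hq hq' heq => by
        rw [Finset.mem_product, mem_range, mem_range] at hq hq'
        exact crt_inj hco hq hq' heq) hcard b hb
    exact ⟨q, hq, hqb.symm⟩
  case h =>
    intro q hq
    rw [Finset.mem_product, mem_range, mem_range] at hq
    obtain ⟨u, v⟩ := q
    simp only
    have r1 : Ee c₁ ((a * c₂) * (u : ℤ) ^ 2) = Ee (c₁ * c₂) ((c₂ : ℤ) * ((a * c₂) * (u : ℤ) ^ 2)) := by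
      rw [mul_comm c₁ c₂, Ee_rescale c₂ c₁ h2.ne' _]
    have r2 : Ee c₂ ((a * c₁) * (v : ℤ) ^ 2) = Ee (c₁ * c₂) ((c₁ : ℤ) * ((a * c₁) * (v : ℤ) ^ 2)) := by
      rw [Ee_rescale c₁ c₂ h1.ne' _]
    rw [r1, r2, ← Ee_add]
    apply Ee_congr hn.ne'
    set y : ℤ := (((c₂ * u + c₁ * v) % (c₁ * c₂) : ℕ) : ℤ) with hy_def
    have hy : ((c₁ * c₂ : ℕ) : ℤ) ∣ ((c₂ * u + c₁ * v : ℕ) : ℤ) - y := by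
      refine ⟨((c₂ * u + c₁ * v) / (c₁ * c₂) : ℕ), ?_⟩
      have hnat := Nat.mod_add_div (c₂ * u + c₁ * v) (c₁ * c₂)
      have hcast : ((c₂ * u + c₁ * v : ℕ) : ℤ)
          = y + ((c₁ * c₂ : ℕ) : ℤ) * (((c₂ * u + c₁ * v) / (c₁ * c₂) : ℕ) : ℤ) := by
        rw [hy_def]
        exact_mod_cast hnat.symm
      linarith [hcast]
    obtain ⟨k, hk⟩ := hy
    refine ⟨-(2 * a * u * v) + a * k * (((c₂ : ℤ) * u + c₁ * v) + y), ?_⟩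
    push_cast at hk ⊢
    linear_combination (a * (((c₂ : ℤ) * u + (c₁ : ℤ) * v) + y)) * hk

lemma not_dvd_of_isCoprime {a : ℤ} {p c : ℕ} (hp : p.Prime) (hpc : p ∣ c)
    (h : IsCoprime a (c : ℤ)) : ¬ (p : ℤ) ∣ a := by
  intro hdvd
  have h2 : (p : ℤ) ∣ (c : ℤ) := Int.natCast_dvd_natCast.mpr hpc
  have hu := IsCoprime.isUnit_of_dvd' h hdvd h2
  rw [Int.isUnit_iff] at hu
  have := hp.two_le
  rcases hu with h | h <;> omega

lemma main_aux : ∀ c : ℕ, Odd c → 0 < c → ∀ a : ℤ, IsCoprime a (c : ℤ) →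
    gaussSum2 a c = (jacobiSym a c : ℂ) * gaussSum2 1 c := by
  intro c
  induction c using Nat.strong_induction_on with
  | _ c ih =>
    intro hodd hpos a hcop
    rcases Nat.lt_or_ge c 2 with hc1 | hc2
    · -- c = 1
      have hc : c = 1 := by omega
      subst hc
      simp [gaussSum2, jacobiSym.one_right]
    · -- c > 1
      set p := c.minFac with hp_def
      have hp : p.Prime := Nat.minFac_prime (by omega)
      haveI : Fact p.Prime := ⟨hp⟩
      have hpdvd : p ∣ c := Nat.minFac_dvd c
      have hp2 : p ≠ 2 := by
        intro h
        have : (2 : ℕ) ∣ c := h ▸ hpdvd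
        rw [Nat.odd_iff] at hodd
        omega
      have hppos : 0 < p := hp.pos
      have ha : ¬ (p : ℤ) ∣ a := not_dvd_of_isCoprime hp hpdvd hcop
      by_cases hsq : p ^ 2 ∣ c
      · -- c = p² L
        obtain ⟨L, hL⟩ := hsq
        have hLpos : 0 < L := by
          rcases Nat.eq_zero_or_pos L with h | h
          · subst h; simp at hL; omega
          · exact h
        have hLodd : Odd L := by
          rw [Nat.odd_iff] at hodd ⊢
          by_contra h
          have : 2 ∣ L := by omega
          have : 2 ∣ c := hL ▸ Dvd.dvd.mul_left this _
          omega
        have hLlt : L < c := by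
          have hp2le : 2 ≤ p := hp.two_le
          have : 4 * L ≤ p ^ 2 * L := Nat.mul_le_mul_right L (by nlinarith)
          omega
        have hLdvd : (L : ℤ) ∣ (c : ℤ) := Int.natCast_dvd_natCast.mpr ⟨p ^ 2, by rw [hL]; ring⟩
        have hcopL : IsCoprime a (L : ℤ) := hcop.of_isCoprime_of_dvd_right hLdvd
        have hGa : gaussSum2 a c = p * gaussSum2 a L := by
          rw [hL]; exact gauss_psq p L hp hp2 hLpos a ha
        have hG1 : gaussSum2 1 c = p * gaussSum2 1 L := by
          rw [hL]
          exact gauss_psq p L hp hp2 hLpos 1 (not_dvd_of_isCoprime hp hpdvd (isCoprime_one_left))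
        have hJ : jacobiSym a c = jacobiSym a L := by
          rw [hL, jacobiSym.mul_right' a (by positivity) hLpos.ne', pow_two,
            jacobiSym.mul_right' a hppos.ne' hppos.ne']
          have hgcd : a.gcd p = 1 :=
            Int.isCoprime_iff_gcd_eq_one.mp (hcop.of_isCoprime_of_dvd_right
              (Int.natCast_dvd_natCast.mpr hpdvd))
          have := jacobiSym.sq_one hgcd
          rw [sq] at this
          rw [this, one_mul]
        rw [hGa, hG1, hJ, ih L hLlt hLodd hLpos a hcopL]
        ring
      · -- c = p * m with p ∤ m
        set m := c / p with hm_def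
        have hcm : c = p * m := (Nat.mul_div_cancel' hpdvd).symm
        have hmpos : 0 < m := by
          rcases Nat.eq_zero_or_pos m with h | h
          · rw [h, mul_zero] at hcm; omega
          · exact h
        have hpm : ¬ p ∣ m := by
          intro ⟨k, hk⟩
          exact hsq ⟨k, by rw [hcm, hk]; ring⟩
        have hcopm : Nat.Coprime p m := (Nat.Prime.coprime_iff_not_dvd hp).mpr hpm
        have hmodd : Odd m := by
          rw [Nat.odd_iff] at hodd ⊢
          by_contra h
          have : 2 ∣ m := by omega
          have : 2 ∣ c := hcm ▸ Dvd.dvd.mul_left this _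
          omega
        have hmlt : m < c := by
          have := hp.two_le
          calc m < 2 * m := by omega
            _ ≤ p * m := Nat.mul_le_mul_right m hp.two_le
            _ = c := hcm.symm
        have hmdvdZ : (m : ℤ) ∣ (c : ℤ) := Int.natCast_dvd_natCast.mpr ⟨p, by rw [hcm]; ring⟩
        have hcopam : IsCoprime a (m : ℤ) := hcop.of_isCoprime_of_dvd_right hmdvdZ
        have hcoppm : IsCoprime (p : ℤ) (m : ℤ) := by
          rw [Int.isCoprime_iff_gcd_eq_one]
          exact_mod_cast hcopm
        have hdvd_am : ¬ (p : ℤ) ∣ a * m := by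
          intro h
          have hpi : Prime (p : ℤ) := Nat.prime_iff_prime_int.mp hp
          rcases hpi.dvd_mul.mp h with h | h
          · exact ha h
          · exact hpm (Int.natCast_dvd_natCast.mp h)
        have hdvd_1m : ¬ (p : ℤ) ∣ 1 * m := by
          rw [one_mul]
          intro h
          exact hpm (Int.natCast_dvd_natCast.mp h)
        have hcop_apm : IsCoprime (a * p) (m : ℤ) := hcopam.mul_left hcoppm
        have hcop_1pm : IsCoprime (1 * (p : ℤ)) (m : ℤ) := isCoprime_one_left.mul_left hcoppm
        have hGa : gaussSum2 a c = gaussSum2 (a * m) p * gaussSum2 (a * p) m := by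
          rw [hcm]; exact gauss_crt p m hppos hmpos hcopm a
        have hG1 : gaussSum2 1 c = gaussSum2 (1 * m) p * gaussSum2 (1 * p) m := by
          rw [hcm]; exact gauss_crt p m hppos hmpos hcopm 1
        have e1 : legendreSym p (a * m) = legendreSym p a * legendreSym p m := legendreSym.mul p a m
        have e2 : legendreSym p (1 * m) = legendreSym p m := by rw [one_mul]
        have e3 : jacobiSym (a * p) m = jacobiSym a m * jacobiSym p m := jacobiSym.mul_left a p m
        have e4 : jacobiSym (1 * p) m = jacobiSym p m := by rw [one_mul]
        have e5 : (legendreSym p a : ℤ) = jacobiSym a p := jacobiSym.legendreSym.to_jacobiSym p a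
        rw [hGa, hG1, gauss_prime p hp2 (a * m) hdvd_am, gauss_prime p hp2 (1 * m) hdvd_1m,
          ih m hmlt hmodd hmpos (a * p) hcop_apm, ih m hmlt hmodd hmpos (1 * p) hcop_1pm,
          hcm, jacobiSym.mul_right' a hppos.ne' hmpos.ne', e1, e2, e3, e4, ← e5]
        push_cast
        ring

end GaussAux

/-- Variation of the quadratic Gauss sum in the numerator:
for odd `c > 0` and `a` coprime to `c`, `G(a,c) = J(a|c)·G(1,c)`, where
`J(a|c)` is the Jacobi symbol. -/
theorem gauss_sum_numerator_variation (c : ℕ) (hc : Odd c) (hpos : 0 < c)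
    (a : ℤ) (hac : IsCoprime a (c : ℤ)) :
    gaussSum2 a c = (jacobiSym a c : ℂ) * gaussSum2 1 c := by
  exact main_aux c hc hpos a hac
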